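/- (Residual lower bound is preserved by the damped Newton update.) Let B ∈ ℝ^{(k+1)×k}, c ∈ ℝ^{k+1}, ȳ ∈ ℝ^k, Δy ∈ ℝ^k and σ ≥ 0. Suppose ‖Bȳ − c‖ ≥ σ and (Bȳ − c)ᵀ B Δy = −½(‖Bȳ − c‖² − σ²). Then for every γ ∈ [0,1], writing y = ȳ + γΔy, it holds that ‖By − c‖² ≥ σ² + γ²‖BΔy‖²; in particular ‖By − c‖ ≥ σ. -/

import Mathlib

open Matrix

/-- Residual lower bound is preserved by the damped Newton update: if
`‖Bȳ − c‖ ≥ σ` and `(Bȳ − c)ᵀBΔy = −½(‖Bȳ − c‖² − σ²)`, then for every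
`γ ∈ [0,1]`, with `y = ȳ + γΔy`, one has
`‖By − c‖² ≥ σ² + γ²‖BΔy‖²`, and in particular `‖By − c‖ ≥ σ`. -/
theorem residual_lower_bound_preserved {k : ℕ}
    (B : Matrix (Fin (k + 1)) (Fin k) ℝ) (c : Fin (k + 1) → ℝ)
    (ybar Δy : Fin k → ℝ) (σ : ℝ) (hσ : 0 ≤ σ)
    (hres : σ ≤ Real.sqrt ((B *ᵥ ybar - c) ⬝ᵥ (B *ᵥ ybar - c)))
    (hnewton : (B *ᵥ ybar - c) ⬝ᵥ (B *ᵥ Δy)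
      = -(1 / 2) * ((B *ᵥ ybar - c) ⬝ᵥ (B *ᵥ ybar - c) - σ ^ 2)) :
    ∀ γ ∈ Set.Icc (0 : ℝ) 1,
      σ ^ 2 + γ ^ 2 * ((B *ᵥ Δy) ⬝ᵥ (B *ᵥ Δy))
          ≤ (B *ᵥ (ybar + γ • Δy) - c) ⬝ᵥ (B *ᵥ (ybar + γ • Δy) - c)
      ∧ σ ≤ Real.sqrt ((B *ᵥ (ybar + γ • Δy) - c) ⬝ᵥ (B *ᵥ (ybar + γ • Δy) - c)) := by
  intro γ hγ
  obtain ⟨hγ0, hγ1⟩ := hγ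
  set r := B *ᵥ ybar - c with hr
  set d := B *ᵥ Δy with hd
  have hrr : (0:ℝ) ≤ r ⬝ᵥ r := by
    simpa [dotProduct] using Finset.sum_nonneg fun i _ => mul_self_nonneg (r i)
  have hσ2 : σ ^ 2 ≤ r ⬝ᵥ r := by
    have := Real.sqrt_le_sqrt hrr
    nlinarith [Real.sq_sqrt hrr, Real.sqrt_nonneg (r ⬝ᵥ r), hres]
  have hvec : B *ᵥ (ybar + γ • Δy) - c = r + γ • d := by
    rw [hr, hd, mulVec_add, mulVec_smul]
    abel
  have hexp : (B *ᵥ (ybar + γ • Δy) - c) ⬝ᵥ (B *ᵥ (ybar + γ • Δy) - c)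
      = r ⬝ᵥ r + 2 * γ * (r ⬝ᵥ d) + γ ^ 2 * (d ⬝ᵥ d) := by
    rw [hvec]
    simp [add_dotProduct, dotProduct_add, smul_dotProduct, dotProduct_smul,
      dotProduct_comm d r, smul_eq_mul]
    ring
  have hmain : σ ^ 2 + γ ^ 2 * (d ⬝ᵥ d)
      ≤ (B *ᵥ (ybar + γ • Δy) - c) ⬝ᵥ (B *ᵥ (ybar + γ • Δy) - c) := by
    rw [hexp]
    nlinarith [hnewton, hσ2, hγ0, hγ1]
  refine ⟨hmain, ?_⟩
  have hdd : (0:ℝ) ≤ d ⬝ᵥ d := by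
    simpa [dotProduct] using Finset.sum_nonneg fun i _ => mul_self_nonneg (d i)
  have h1 : σ ^ 2 ≤ (B *ᵥ (ybar + γ • Δy) - c) ⬝ᵥ (B *ᵥ (ybar + γ • Δy) - c) := by
    nlinarith [hmain, sq_nonneg γ]
  calc σ = Real.sqrt (σ ^ 2) := by rw [Real.sqrt_sq hσ]
    _ ≤ _ := Real.sqrt_le_sqrt h1
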